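/- Let (B, 𝔼, 𝔰) be an extriangulated category and let A ↣ B ↠ C be an 𝔼-triangle realizing δ ∈ 𝔼(C, A). Then for every object X of B, the sequence of abelian groups B(C,X) → B(B,X) → B(A,X) → 𝔼(C,X) → 𝔼(B,X) → 𝔼(A,X), where the first two maps are precomposition with the deflation and inflation respectively, the middle map sends f to f_*δ, and the last two maps are 𝔼 applied contravariantly, is exact. -/

import Mathlib

open CategoryTheory Category Limits Opposite ZeroObject

universe v u

namespace ExtStmt

variable (B : Type u) [Category.{v} B] [Preadditive B] [HasZeroObject B] [HasBinaryBiproducts B]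

/-- An extriangulated category structure on an additive category `B`,
following Nakaoka–Palu. `E` is the biadditive extension bifunctor, and `Real δ X a b`
expresses that the sequence `A ⟶ X ⟶ C` (given by `a`, `b`) belongs to the equivalence
class `𝔰(δ)`, i.e. realizes the extension `δ ∈ 𝔼(C, A)`. -/
structure Extriangulated where
  /-- The extension bifunctor `𝔼 : Bᵒᵖ × B ⥤ Ab`. -/
  E : Bᵒᵖ ⥤ B ⥤ AddCommGrpCat.{v}
  /-- `𝔼(C, -)` is additive. -/
  addE₁ : ∀ C : Bᵒᵖ, (E.obj C).Additive
  /-- `𝔼(-, A)` is additive. -/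
  addE₂ : ∀ A : B, (E.flip.obj A).Additive
  /-- The realization: `Real δ X a b` means `A ⟶ X ⟶ C` realizes `δ ∈ 𝔼(C, A)`. -/
  Real : ∀ {A C : B}, ((E.obj (op C)).obj A) → ∀ (X : B), (A ⟶ X) → (X ⟶ C) → Prop
  /-- Every extension is realized by some sequence. -/
  real_ex : ∀ {A C : B} (δ : (E.obj (op C)).obj A),
    ∃ (X : B) (a : A ⟶ X) (b : X ⟶ C), Real δ X a b
  /-- `𝔰(δ)` is closed under the equivalence of sequences. -/
  real_iso : ∀ {A C X X' : B} (δ : (E.obj (op C)).obj A) (a : A ⟶ X) (b : X ⟶ C) (i : X ≅ X'),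
    Real δ X a b → Real δ X' (a ≫ i.hom) (i.inv ≫ b)
  /-- Any two realizations of `δ` are equivalent sequences. -/
  real_unique : ∀ {A C X X' : B} (δ : (E.obj (op C)).obj A) (a : A ⟶ X) (b : X ⟶ C)
    (a' : A ⟶ X') (b' : X' ⟶ C), Real δ X a b → Real δ X' a' b' →
    ∃ i : X ≅ X', a ≫ i.hom = a' ∧ i.hom ≫ b' = b
  /-- Realization of morphisms of extensions: if `f_*δ = h^*δ'` then the pair `(f, h)` is
  realized by some `(f, g, h)`. -/
  real_mor : ∀ {A C A' C' X X' : B} (δ : (E.obj (op C)).obj A) (δ' : (E.obj (op C')).obj A')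
    (f : A ⟶ A') (h : C ⟶ C') (a : A ⟶ X) (b : X ⟶ C) (a' : A' ⟶ X') (b' : X' ⟶ C'),
    Real δ X a b → Real δ' X' a' b' →
    ((E.obj (op C)).map f) δ = ((E.map h.op).app A') δ' →
    ∃ g : X ⟶ X', a ≫ g = f ≫ a' ∧ g ≫ b' = b ≫ h
  /-- Additivity of the realization: `0` is realized by the split sequence. -/
  real_zero : ∀ (A C : B),
    Real (0 : (E.obj (op C)).obj A) (A ⊞ C) biprod.inl biprod.snd
  /-- Additivity of the realization: direct sums. -/
  real_sum : ∀ {A C A' C' X X' : B} (δ : (E.obj (op C)).obj A) (δ' : (E.obj (op C')).obj A')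
    (a : A ⟶ X) (b : X ⟶ C) (a' : A' ⟶ X') (b' : X' ⟶ C'),
    Real δ X a b → Real δ' X' a' b' →
    Real (((E.map (biprod.fst : C ⊞ C' ⟶ C).op).app (A ⊞ A'))
            (((E.obj (op C)).map (biprod.inl : A ⟶ A ⊞ A')) δ)
          + ((E.map (biprod.snd : C ⊞ C' ⟶ C').op).app (A ⊞ A'))
            (((E.obj (op C')).map (biprod.inr : A' ⟶ A ⊞ A')) δ'))
      (X ⊞ X') (biprod.map a a') (biprod.map b b')
  /-- Axiom (ET3). -/
  et3 : ∀ {A C A' C' X X' : B} (δ : (E.obj (op C)).obj A) (δ' : (E.obj (op C')).obj A')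
    (a : A ⟶ X) (b : X ⟶ C) (a' : A' ⟶ X') (b' : X' ⟶ C') (f : A ⟶ A') (g : X ⟶ X'),
    Real δ X a b → Real δ' X' a' b' → a ≫ g = f ≫ a' →
    ∃ h : C ⟶ C', g ≫ b' = b ≫ h ∧ ((E.obj (op C)).map f) δ = ((E.map h.op).app A') δ'
  /-- Axiom (ET3ᵒᵖ). -/
  et3op : ∀ {A C A' C' X X' : B} (δ : (E.obj (op C)).obj A) (δ' : (E.obj (op C')).obj A')
    (a : A ⟶ X) (b : X ⟶ C) (a' : A' ⟶ X') (b' : X' ⟶ C') (g : X ⟶ X') (h : C ⟶ C'),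
    Real δ X a b → Real δ' X' a' b' → g ≫ b' = b ≫ h →
    ∃ f : A ⟶ A', a ≫ g = f ≫ a' ∧ ((E.obj (op C)).map f) δ = ((E.map h.op).app A') δ'
  /-- Axiom (ET4). -/
  et4 : ∀ {A B₀ D C₀ F : B} (δ : (E.obj (op D)).obj A) (δ' : (E.obj (op F)).obj B₀)
    (a : A ⟶ B₀) (a' : B₀ ⟶ D) (bb : B₀ ⟶ C₀) (b' : C₀ ⟶ F),
    Real δ B₀ a a' → Real δ' C₀ bb b' →
    ∃ (E₀ : B) (c' : C₀ ⟶ E₀) (δ'' : (E.obj (op E₀)).obj A) (d : D ⟶ E₀) (e : E₀ ⟶ F),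
      Real δ'' C₀ (a ≫ bb) c' ∧
      Real (((E.obj (op F)).map a') δ') E₀ d e ∧
      a' ≫ d = bb ≫ c' ∧ c' ≫ e = b' ∧
      ((E.map d.op).app A) δ'' = δ ∧
      ((E.obj (op E₀)).map a) δ'' = ((E.map e.op).app B₀) δ'
  /-- Axiom (ET4ᵒᵖ). -/
  et4op : ∀ {A C₀ E₀ D F : B} (δ'' : (E.obj (op E₀)).obj A) (θ : (E.obj (op F)).obj D)
    (c : A ⟶ C₀) (c' : C₀ ⟶ E₀) (d : D ⟶ E₀) (e : E₀ ⟶ F),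
    Real δ'' C₀ c c' → Real θ E₀ d e →
    ∃ (B₀ : B) (a : A ⟶ B₀) (a' : B₀ ⟶ D) (bb : B₀ ⟶ C₀)
      (δ : (E.obj (op D)).obj A) (δ' : (E.obj (op F)).obj B₀),
      Real δ B₀ a a' ∧ Real δ' C₀ bb (c' ≫ e) ∧
      a ≫ bb = c ∧ a' ≫ d = bb ≫ c' ∧
      θ = ((E.obj (op F)).map a') δ' ∧
      ((E.map d.op).app A) δ'' = δ ∧
      ((E.obj (op E₀)).map a) δ'' = ((E.map e.op).app B₀) δ'

variable {B}

/-- The group of extensions `𝔼(C, A)`. -/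
abbrev Extriangulated.Ext (T : Extriangulated B) (C A : B) : Type v :=
  (T.E.obj (op C)).obj A

/-- `f_*δ`, the pushforward of an extension along `f : A ⟶ A'`. -/
abbrev Extriangulated.push (T : Extriangulated B) {C A A' : B} (f : A ⟶ A')
    (δ : T.Ext C A) : T.Ext C A' :=
  ((T.E.obj (op C)).map f) δ

/-- `g^*δ`, the pullback of an extension along `g : C ⟶ C'`. -/
abbrev Extriangulated.pull (T : Extriangulated B) {C C' A : B} (g : C ⟶ C')
    (δ : T.Ext C' A) : T.Ext C A :=
  ((T.E.map g.op).app A) δ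

/-- A pair of composable morphisms is a conflation if it realizes some extension. -/
def Extriangulated.IsConflation (T : Extriangulated B) {A X C : B}
    (a : A ⟶ X) (b : X ⟶ C) : Prop :=
  ∃ δ : T.Ext C A, T.Real δ X a b


set_option linter.unusedSectionVars false

section Hearts

variable {B : Type u} [Category.{v} B] [Preadditive B] [HasZeroObject B] [HasBinaryBiproducts B]

def wRel (Wp : B → Prop) (P : B → Prop) : HomRel (ObjectProperty.FullSubcategory P) :=
  fun {X Y} f g =>
    ∃ (Wo : B) (_ : Wp Wo) (p : X.obj ⟶ Wo) (q : Wo ⟶ Y.obj), p ≫ q = f.hom - g.hom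

abbrev HeartCat (Wp : B → Prop) (P : B → Prop) := CategoryTheory.Quotient (wRel Wp P)

theorem wRel_congruence (Wp P : B → Prop) (hW0 : Wp (0 : B))
    (hWbi : ∀ {X Y : B}, Wp X → Wp Y → Wp (X ⊞ Y)) : Congruence (wRel Wp P) where
  equivalence := by
    refine fun {X Y} => ⟨?_, ?_, ?_⟩
    · intro f
      exact ⟨0, hW0, 0, 0, by simp⟩
    · rintro f g ⟨Wo, hw, p, q, h⟩
      exact ⟨Wo, hw, -p, q, by rw [Preadditive.neg_comp, h]; abel⟩
    · rintro f g h ⟨W₁, hw₁, p₁, q₁, h₁⟩ ⟨W₂, hw₂, p₂, q₂, h₂⟩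
      exact ⟨W₁ ⊞ W₂, hWbi hw₁ hw₂, biprod.lift p₁ p₂, biprod.desc q₁ q₂, by
        rw [biprod.lift_desc, h₁, h₂]; abel⟩
  comp_left := by
    rintro X Y Z f g g' ⟨Wo, hw, p, q, h⟩
    exact ⟨Wo, hw, f.hom ≫ p, q, by rw [Category.assoc, h, Preadditive.comp_sub]; rfl⟩
  comp_right := by
    rintro X Y Z f f' g ⟨Wo, hw, p, q, h⟩
    exact ⟨Wo, hw, p, q ≫ g.hom, by rw [← Category.assoc, h, Preadditive.sub_comp]; rfl⟩

theorem wRel_add (Wp P : B → Prop)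
    (hWbi : ∀ {X Y : B}, Wp X → Wp Y → Wp (X ⊞ Y)) :
    ∀ ⦃X Y : ObjectProperty.FullSubcategory P⦄ (f₁ f₂ g₁ g₂ : X ⟶ Y) (_ : wRel Wp P f₁ f₂)
      (_ : wRel Wp P g₁ g₂), wRel Wp P (f₁ + g₁) (f₂ + g₂) := by
  rintro X Y f₁ f₂ g₁ g₂ ⟨W₁, hw₁, p₁, q₁, h₁⟩ ⟨W₂, hw₂, p₂, q₂, h₂⟩
  exact ⟨W₁ ⊞ W₂, hWbi hw₁ hw₂, biprod.lift p₁ p₂, biprod.desc q₁ q₂, by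
    rw [biprod.lift_desc, h₁, h₂]; change _ = (f₁.hom + g₁.hom) - (f₂.hom + g₂.hom); abel⟩

/-- The heart is preadditive. -/
def heartPreadditive (Wp P : B → Prop) (hW0 : Wp (0 : B))
    (hWbi : ∀ {X Y : B}, Wp X → Wp Y → Wp (X ⊞ Y)) : Preadditive (HeartCat Wp P) :=
  letI := wRel_congruence Wp P hW0 hWbi
  Quotient.preadditive _ (wRel_add Wp P hWbi)

/-- The heart has zero morphisms. -/
def heartZeroMorphisms (Wp P : B → Prop) (hW0 : Wp (0 : B))
    (hWbi : ∀ {X Y : B}, Wp X → Wp Y → Wp (X ⊞ Y)) : HasZeroMorphisms (HeartCat Wp P) :=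
  letI := heartPreadditive Wp P hW0 hWbi
  inferInstance

/-- A full additive subcategory closed under direct summands and isomorphisms. -/
structure IsGoodSubcat (P : B → Prop) : Prop where
  mem_of_iso : ∀ {X Y : B}, (X ≅ Y) → P X → P Y
  zero_mem : P (0 : B)
  biprod_mem : ∀ {X Y : B}, P X → P Y → P (X ⊞ Y)
  summand_mem : ∀ {X Y : B}, P (X ⊞ Y) → P X

/-- `(U, V)` is a cotorsion pair on the extriangulated category `(B, 𝔼, 𝔰)`. -/
structure IsCotorsionPair (T : Extriangulated B) (U V : B → Prop) : Prop where
  subU : IsGoodSubcat U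
  subV : IsGoodSubcat V
  ext_vanish : ∀ {u v : B}, U u → V v → ∀ δ : T.Ext u v, δ = 0
  cone : ∀ X : B, ∃ (v u : B) (f : v ⟶ u) (g : u ⟶ X), V v ∧ U u ∧ T.IsConflation f g
  cocone : ∀ X : B, ∃ (v u : B) (f : X ⟶ v) (g : v ⟶ u), V v ∧ U u ∧ T.IsConflation f g

/-- `((S,Tc),(U,V))` is a twin cotorsion pair: two cotorsion pairs with `𝔼(S, V) = 0`. -/
def IsTwinCotorsionPair (T : Extriangulated B) (S Tc U V : B → Prop) : Prop :=
  IsCotorsionPair T S Tc ∧ IsCotorsionPair T U V ∧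
    ∀ {s v : B}, S s → V v → ∀ δ : T.Ext s v, δ = 0

/-- Projective object of an extriangulated category. -/
def IsProjObj (T : Extriangulated B) (P : B) : Prop :=
  ∀ {A X C : B} (a : A ⟶ X) (b : X ⟶ C), T.IsConflation a b →
    ∀ c : P ⟶ C, ∃ d : P ⟶ X, d ≫ b = c

/-- Injective object of an extriangulated category. -/
def IsInjObj (T : Extriangulated B) (I : B) : Prop :=
  ∀ {A X C : B} (a : A ⟶ X) (b : X ⟶ C), T.IsConflation a b →
    ∀ c : A ⟶ I, ∃ d : X ⟶ I, a ≫ d = c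

/-- `B` has enough projectives. -/
def HasEnoughProj (T : Extriangulated B) : Prop :=
  ∀ C : B, ∃ (A P : B) (f : A ⟶ P) (p : P ⟶ C), IsProjObj T P ∧ T.IsConflation f p

/-- `B` has enough injectives. -/
def HasEnoughInj (T : Extriangulated B) : Prop :=
  ∀ A : B, ∃ (I C : B) (i : A ⟶ I) (p : I ⟶ C), IsInjObj T I ∧ T.IsConflation i p

/-- `W = Tc ∩ U`. -/
def Wpred (Tc U : B → Prop) : B → Prop := fun X => Tc X ∧ U X

/-- `CoCone(P, Q)`: objects `X` with a conflation `X ↣ P' ↠ Q'`, `P' ∈ P`, `Q' ∈ Q`. -/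
def CoConeOf (T : Extriangulated B) (P Q : B → Prop) : B → Prop := fun X =>
  ∃ (p q : B) (f : X ⟶ p) (g : p ⟶ q), P p ∧ Q q ∧ T.IsConflation f g

/-- `Cone(P, Q)`: objects `X` with a conflation `P' ↣ Q' ↠ X`, `P' ∈ P`, `Q' ∈ Q`. -/
def ConeOf (T : Extriangulated B) (P Q : B → Prop) : B → Prop := fun X =>
  ∃ (p q : B) (f : p ⟶ q) (g : q ⟶ X), P p ∧ Q q ∧ T.IsConflation f g

/-- `P * Q`: objects `X` with a conflation `P' ↣ X ↠ Q'`, `P' ∈ P`, `Q' ∈ Q`. -/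
def StarOf (T : Extriangulated B) (P Q : B → Prop) : B → Prop := fun X =>
  ∃ (p q : B) (f : p ⟶ X) (g : X ⟶ q), P p ∧ Q q ∧ T.IsConflation f g

/-- `B⁻ = CoCone(W, S)`. -/
def Bminus (T : Extriangulated B) (S Tc U : B → Prop) : B → Prop :=
  CoConeOf T (Wpred Tc U) S

/-- `B⁺ = Cone(V, W)`. -/
def Bplus (T : Extriangulated B) (Tc U V : B → Prop) : B → Prop :=
  ConeOf T V (Wpred Tc U)

/-- `H = B⁻ ∩ B⁺`, the objects of the heart. -/
def HeartPred (T : Extriangulated B) (S Tc U V : B → Prop) : B → Prop := fun X =>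
  Bminus T S Tc U X ∧ Bplus T Tc U V X

/-- The heart `H̄ = H/[W]` of a twin cotorsion pair. -/
abbrev TwinHeart (T : Extriangulated B) (S Tc U V : B → Prop) :=
  HeartCat (Wpred Tc U) (HeartPred T S Tc U V)

/-- Zero morphisms on the heart of a twin cotorsion pair. -/
def heartZeroOfTwin (T : Extriangulated B) {S Tc U V : B → Prop}
    (h : IsTwinCotorsionPair T S Tc U V) (P : B → Prop) :
    HasZeroMorphisms (HeartCat (Wpred Tc U) P) :=
  heartZeroMorphisms _ _ ⟨h.1.subV.zero_mem, h.2.1.subU.zero_mem⟩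
    (fun hx hy => ⟨h.1.subV.biprod_mem hx.1 hy.1, h.2.1.subU.biprod_mem hx.2 hy.2⟩)

end Hearts


section LES

variable {B : Type u} [Category.{v} B] [Preadditive B] [HasZeroObject B]
  [HasBinaryBiproducts B] (T : Extriangulated B)

lemma Extriangulated.push_comp' {C A A' A'' : B} (f : A ⟶ A') (g : A' ⟶ A'') (δ : T.Ext C A) :
    T.push (f ≫ g) δ = T.push g (T.push f δ) := by
  simp [Extriangulated.push, Functor.map_comp]

lemma Extriangulated.push_id' {C A : B} (δ : T.Ext C A) : T.push (𝟙 A) δ = δ := by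
  simp [Extriangulated.push]

lemma Extriangulated.push_zero_hom' {C A A' : B} (δ : T.Ext C A) :
    T.push (0 : A ⟶ A') δ = 0 := by
  letI := T.addE₁ (op C)
  rw [Extriangulated.push, Functor.map_zero]
  simp

lemma Extriangulated.push_zero' {C A A' : B} (f : A ⟶ A') : T.push f (0 : T.Ext C A) = 0 :=
  map_zero _

lemma Extriangulated.pull_comp' {C C' C'' A : B} (f : C ⟶ C') (g : C' ⟶ C'') (δ : T.Ext C'' A) :
    T.pull (f ≫ g) δ = T.pull f (T.pull g δ) := by
  simp [Extriangulated.pull, op_comp, Functor.map_comp]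

lemma Extriangulated.pull_id' {C A : B} (δ : T.Ext C A) : T.pull (𝟙 C) δ = δ := by
  simp [Extriangulated.pull]

lemma Extriangulated.pull_zero_hom' {C C' A : B} (δ : T.Ext C' A) :
    T.pull (0 : C ⟶ C') δ = 0 := by
  letI := T.addE₂ A
  show ((T.E.flip.obj A).map (0 : C ⟶ C').op) δ = 0
  rw [op_zero, Functor.map_zero]
  rfl

lemma Extriangulated.pull_zero' {C C' A : B} (f : C ⟶ C') : T.pull f (0 : T.Ext C' A) = 0 :=
  map_zero _

lemma Extriangulated.pull_push' {C C' A A' : B} (g : C ⟶ C') (f : A ⟶ A') (δ : T.Ext C' A) :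
    T.pull g (T.push f δ) = T.push f (T.pull g δ) := by
  have h1 := (T.E.map g.op).naturality f
  show ((T.E.obj (op C')).map f ≫ (T.E.map g.op).app A') δ =
      ((T.E.map g.op).app A ≫ (T.E.obj (op C)).map f) δ
  rw [h1]

/-- Realization of `0 ∈ 𝔼(Z, 0)` by `0 ⟶ Z = Z`. -/
lemma Extriangulated.real_zero_left (Z : B) :
    T.Real (0 : T.Ext Z (0 : B)) Z (0 : (0 : B) ⟶ Z) (𝟙 Z) := by
  have hfst : (biprod.fst : (0 : B) ⊞ Z ⟶ (0 : B)) = 0 :=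
    (Limits.isZero_zero B).eq_of_tgt _ _
  have hhi : (biprod.snd : (0 : B) ⊞ Z ⟶ Z) ≫ biprod.inr = 𝟙 ((0 : B) ⊞ Z) := by
    rw [← biprod.total, hfst, zero_comp, zero_add]
  have h := T.real_iso (0 : T.Ext Z (0 : B)) biprod.inl biprod.snd
    ⟨biprod.snd, biprod.inr, hhi, by simp⟩ (T.real_zero (0 : B) Z)
  simpa using h

/-- Realization of `0 ∈ 𝔼(0, Z)` by `Z = Z ⟶ 0`. -/
lemma Extriangulated.real_zero_right (Z : B) :
    T.Real (0 : T.Ext (0 : B) Z) Z (𝟙 Z) (0 : Z ⟶ (0 : B)) := by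
  have hsnd : (biprod.snd : Z ⊞ (0 : B) ⟶ (0 : B)) = 0 :=
    (Limits.isZero_zero B).eq_of_tgt _ _
  have hhi : (biprod.fst : Z ⊞ (0 : B) ⟶ Z) ≫ biprod.inl = 𝟙 (Z ⊞ (0 : B)) := by
    rw [← biprod.total, hsnd, zero_comp, add_zero]
  have h := T.real_iso (0 : T.Ext (0 : B) Z) biprod.inl biprod.snd
    ⟨biprod.fst, biprod.inl, hhi, by simp⟩ (T.real_zero Z (0 : B))
  have h2 : (biprod.inl : Z ⟶ Z ⊞ (0 : B)) ≫ biprod.snd = (0 : Z ⟶ (0 : B)) :=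
    (Limits.isZero_zero B).eq_of_tgt _ _
  simpa [h2] using h

/-- A conflation realizing `0` splits. -/
lemma Extriangulated.split_of_real_zero {X A' Y : B} (p : X ⟶ Y) (q : Y ⟶ A')
    (hr : T.Real (0 : T.Ext A' X) Y p q) : ∃ r : Y ⟶ X, p ≫ r = 𝟙 X := by
  obtain ⟨i, hi1, _⟩ := T.real_unique (0 : T.Ext A' X) p q biprod.inl biprod.snd hr
    (T.real_zero X A')
  exact ⟨i.hom ≫ biprod.fst, by rw [← Category.assoc, hi1]; simp⟩

end LES

/-- Liu–Nakaoka/Nakaoka–Palu: the contravariant long exact sequence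
`B(C,X) → B(B,X) → B(A,X) → 𝔼(C,X) → 𝔼(B,X) → 𝔼(A,X)`
associated to an 𝔼-triangle `A ↣ B ↠ C` (exactness at the four middle spots). -/
theorem stmt8 {B : Type u} [Category.{v} B] [Preadditive B] [HasZeroObject B]
    [HasBinaryBiproducts B] (T : Extriangulated B) {A C X₀ : B}
    (δ : T.Ext C A) (a : A ⟶ X₀) (b : X₀ ⟶ C) (h : T.Real δ X₀ a b) (X : B) :
    (∀ u : X₀ ⟶ X, a ≫ u = 0 ↔ ∃ w : C ⟶ X, u = b ≫ w) ∧
    (∀ f : A ⟶ X, T.push f δ = 0 ↔ ∃ u : X₀ ⟶ X, f = a ≫ u) ∧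
    (∀ ε : T.Ext C X, T.pull b ε = 0 ↔ ∃ f : A ⟶ X, ε = T.push f δ) ∧
    (∀ ε : T.Ext X₀ X, T.pull a ε = 0 ↔ ∃ ε' : T.Ext C X, ε = T.pull b ε') := by
  -- the composition of a conflation is zero
  have hab : a ≫ b = 0 := by
    obtain ⟨g, hg1, hg2⟩ := T.real_mor δ (0 : T.Ext C (0 : B)) (0 : A ⟶ (0 : B)) (𝟙 C)
      a b (0 : (0 : B) ⟶ C) (𝟙 C) h (T.real_zero_left C)
      (by rw [map_zero]; exact T.push_zero_hom' δ)
    rw [comp_id, comp_id] at hg2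
    rw [hg2] at hg1
    simpa using hg1
  -- `b^*δ = 0`
  have hbδ : T.pull b δ = 0 := by
    obtain ⟨f, _, hf2⟩ := T.et3op (0 : T.Ext X₀ A) δ biprod.inl biprod.snd a b
      biprod.snd b (T.real_zero A X₀) h rfl
    rw [map_zero] at hf2
    exact hf2.symm
  refine ⟨?_, ?_, ?_, ?_⟩
  · -- exactness at B(X₀, X)
    intro u
    constructor
    · intro hau
      obtain ⟨w, hw1, _⟩ := T.et3 δ (0 : T.Ext X (0 : B)) a b (0 : (0 : B) ⟶ X) (𝟙 X)
        (0 : A ⟶ (0 : B)) u h (T.real_zero_left X) (by simp [hau])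
      rw [comp_id] at hw1
      exact ⟨w, hw1⟩
    · rintro ⟨w, rfl⟩
      rw [← Category.assoc, hab, zero_comp]
  · -- exactness at B(A, X)
    intro f
    constructor
    · intro hf
      obtain ⟨g, hg1, _⟩ := T.real_mor δ (0 : T.Ext C X) f (𝟙 C) a b
        biprod.inl biprod.snd h (T.real_zero X C) (by rw [map_zero]; exact hf)
      exact ⟨g ≫ biprod.fst, by rw [← Category.assoc, hg1]; simp⟩
    · rintro ⟨u, rfl⟩
      obtain ⟨f', hf1, hf2⟩ := T.et3op δ (0 : T.Ext (0 : B) X) a b (𝟙 X) (0 : X ⟶ (0 : B))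
        u (0 : C ⟶ (0 : B)) h (T.real_zero_right X) ((Limits.isZero_zero B).eq_of_tgt _ _)
      rw [comp_id] at hf1
      rw [map_zero] at hf2
      rw [hf1]
      exact hf2
  · -- exactness at 𝔼(C, X)
    intro ε
    constructor
    · intro hε
      obtain ⟨Y, x, y, hY⟩ := T.real_ex ε
      obtain ⟨g, hg1, hg2⟩ := T.real_mor (0 : T.Ext X₀ X) ε (𝟙 X) b
        biprod.inl biprod.snd x y (T.real_zero X X₀) hY
        (by rw [map_zero]; exact hε.symm)
      have hty : (biprod.inr ≫ g) ≫ y = b ≫ 𝟙 C := by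
        rw [Category.assoc, hg2, ← Category.assoc]; simp
      obtain ⟨f, _, hf2⟩ := T.et3op δ ε a b x y (biprod.inr ≫ g) (𝟙 C) h hY hty
      refine ⟨f, ?_⟩
      rw [show T.push f δ = T.pull (𝟙 C) ε from hf2, T.pull_id']
    · rintro ⟨f, rfl⟩
      rw [T.pull_push', hbδ, T.push_zero']
  · -- exactness at 𝔼(X₀, X)
    intro ε
    constructor
    · intro hε
      obtain ⟨Y, x, y, hY⟩ := T.real_ex ε
      obtain ⟨B₀, xb, a', bb, δ₁, δ₂, hr1, _, _, _, _, hd, hlast⟩ :=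
        T.et4op ε δ x y a b hY h
      have hδ₁ : δ₁ = 0 := by rw [← hd]; exact hε
      rw [hδ₁] at hr1
      obtain ⟨r, hr⟩ := T.split_of_real_zero xb a' hr1
      refine ⟨T.push r δ₂, ?_⟩
      have h1 : T.push xb ε = T.pull b δ₂ := hlast
      calc ε = T.push (xb ≫ r) ε := by rw [hr, T.push_id']
        _ = T.push r (T.push xb ε) := T.push_comp' _ _ _
        _ = T.push r (T.pull b δ₂) := by rw [h1]
        _ = T.pull b (T.push r δ₂) := (T.pull_push' _ _ _).symm
    · rintro ⟨ε', rfl⟩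
      rw [← T.pull_comp', hab, T.pull_zero_hom']
end ExtStmt
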